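/- Let η_a and η_b be probability distributions on {0,...,k-1} (k ≥ 2). Then the minimum median width ε*(η_a, η_b) is at most (1/2)·(2k−3)/(2k−1). Equivalently, there exists an integer r ∈ {−(k−1),...,k−1} such that for all joint distributions η with marginals (η_a, η_b), P_η[X−Y < r] ≤ 1/2 + (1/2)(2k−3)/(2k−1) and P_η[X−Y ≤ r] ≥ 1/2 − (1/2)(2k−3)/(2k−1). -/
import Mathlib


open Finset

def IsDist (k : ℕ) (p : Fin k → ℝ) : Prop :=
  (∀ x, 0 ≤ p x) ∧ ∑ x, p x = 1

def IsJoint (k : ℕ) (η : Fin k → Fin k → ℝ) : Prop :=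
  (∀ x y, 0 ≤ η x y) ∧ ∑ x, ∑ y, η x y = 1

def margA (k : ℕ) (η : Fin k → Fin k → ℝ) (x : Fin k) : ℝ := ∑ y, η x y

def margB (k : ℕ) (η : Fin k → Fin k → ℝ) (y : Fin k) : ℝ := ∑ x, η x y

noncomputable def qLow (k : ℕ) (r : ℝ) (η : Fin k → Fin k → ℝ) : ℝ :=
  ∑ x : Fin k, ∑ y : Fin k, if ((x : ℕ) : ℝ) - ((y : ℕ) : ℝ) < r then η x y else 0

noncomputable def qUp (k : ℕ) (r : ℝ) (η : Fin k → Fin k → ℝ) : ℝ :=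
  ∑ x : Fin k, ∑ y : Fin k, if ((x : ℕ) : ℝ) - ((y : ℕ) : ℝ) ≤ r then η x y else 0

noncomputable def ate (k : ℕ) (η : Fin k → Fin k → ℝ) : ℝ :=
  ∑ x : Fin k, ∑ y : Fin k, (((x : ℕ) : ℝ) - ((y : ℕ) : ℝ)) * η x y

noncomputable def nuL (k : ℕ) (r : ℝ) (ηa ηb : Fin k → ℝ) : ℝ :=
  sSup {v | ∃ η, IsJoint k η ∧ margA k η = ηa ∧ margB k η = ηb ∧ v = qLow k r η}

noncomputable def nuU (k : ℕ) (r : ℝ) (ηa ηb : Fin k → ℝ) : ℝ :=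
  sInf {v | ∃ η, IsJoint k η ∧ margA k η = ηa ∧ margB k η = ηb ∧ v = qUp k r η}

noncomputable def widthOf (k : ℕ) (r : ℝ) (ηa ηb : Fin k → ℝ) : ℝ :=
  max (max (nuL k r ηa ηb - 1/2) 0) (max (1/2 - nuU k r ηa ηb) 0)

noncomputable def epsStar (k : ℕ) (ηa ηb : Fin k → ℝ) : ℝ :=
  sInf {e | ∃ r : ℤ, -((k : ℤ) - 1) ≤ r ∧ r ≤ (k : ℤ) - 1 ∧ e = widthOf k (r : ℝ) ηa ηb}

noncomputable def dTV (k : ℕ) (p q : Fin k → ℝ) : ℝ := (1/2) * ∑ x, |p x - q x|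

noncomputable def dTV2 (k : ℕ) (η ρ : Fin k → Fin k → ℝ) : ℝ :=
  (1/2) * ∑ x, ∑ y, |η x y - ρ x y|

noncomputable def cumF (k : ℕ) (p : Fin k → ℝ) (j : ℤ) : ℝ :=
  ∑ x ∈ Finset.univ.filter (fun x : Fin k => (x : ℤ) ≤ j), p x

lemma cumF_neg (k : ℕ) (p : Fin k → ℝ) (j : ℤ) (hj : j < 0) : cumF k p j = 0 := by
  unfold cumF
  rw [Finset.filter_false_of_mem]
  · simp
  · intro x _
    omega

lemma cumF_one (k : ℕ) (p : Fin k → ℝ) (j : ℤ) (hj : (k:ℤ) - 1 ≤ j)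
    (hs : ∑ x, p x = 1) : cumF k p j = 1 := by
  unfold cumF
  rw [Finset.filter_true_of_mem]
  · exact hs
  · intro x _
    have := x.isLt
    omega

lemma frechet_up (k : ℕ) (r j : ℤ) (η : Fin k → Fin k → ℝ) (hpos : ∀ x y, 0 ≤ η x y) :
    cumF k (margA k η) j - cumF k (margB k η) (j - r - 1) ≤ qUp k (r : ℝ) η := by
  have hA : cumF k (margA k η) j
      = ∑ x : Fin k, ∑ y : Fin k, if (x:ℤ) ≤ j then η x y else 0 := by
    unfold cumF margA
    rw [Finset.sum_filter]
    exact Finset.sum_congr rfl fun x _ => by split <;> simp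
  have hB : cumF k (margB k η) (j - r - 1)
      = ∑ x : Fin k, ∑ y : Fin k, if (y:ℤ) ≤ j - r - 1 then η x y else 0 := by
    unfold cumF margB
    rw [Finset.sum_filter]
    calc (∑ y : Fin k, if (y:ℤ) ≤ j - r - 1 then ∑ x : Fin k, η x y else 0)
        = ∑ y : Fin k, ∑ x : Fin k, if (y:ℤ) ≤ j - r - 1 then η x y else 0 :=
          Finset.sum_congr rfl fun y _ => by split <;> simp
      _ = ∑ x : Fin k, ∑ y : Fin k, if (y:ℤ) ≤ j - r - 1 then η x y else 0 :=
          Finset.sum_comm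
  rw [hA, hB, ← Finset.sum_sub_distrib]
  unfold qUp
  apply Finset.sum_le_sum
  intro x _
  rw [← Finset.sum_sub_distrib]
  apply Finset.sum_le_sum
  intro y _
  have h0 := hpos x y
  split_ifs <;> try linarith
  all_goals
    exfalso
    rename_i ha1 ha2 ha3
    have h4 : (r:ℝ) < ((x:ℕ):ℝ) - ((y:ℕ):ℝ) := not_le.mp ha3
    have h5 : (r:ℤ) < (x:ℤ) - (y:ℤ) := by exact_mod_cast h4
    omega

lemma frechet_low (k : ℕ) (r i : ℤ) (η : Fin k → Fin k → ℝ) (hpos : ∀ x y, 0 ≤ η x y)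
    (hsum : ∑ x, ∑ y, η x y = 1) :
    qLow k (r : ℝ) η ≤ 1 - (cumF k (margB k η) i - cumF k (margA k η) (i + r - 1)) := by
  have hA : cumF k (margA k η) (i + r - 1)
      = ∑ x : Fin k, ∑ y : Fin k, if (x:ℤ) ≤ i + r - 1 then η x y else 0 := by
    unfold cumF margA
    rw [Finset.sum_filter]
    exact Finset.sum_congr rfl fun x _ => by split <;> simp
  have hB : cumF k (margB k η) i
      = ∑ x : Fin k, ∑ y : Fin k, if (y:ℤ) ≤ i then η x y else 0 := by
    unfold cumF margB
    rw [Finset.sum_filter]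
    calc (∑ y : Fin k, if (y:ℤ) ≤ i then ∑ x : Fin k, η x y else 0)
        = ∑ y : Fin k, ∑ x : Fin k, if (y:ℤ) ≤ i then η x y else 0 :=
          Finset.sum_congr rfl fun y _ => by split <;> simp
      _ = ∑ x : Fin k, ∑ y : Fin k, if (y:ℤ) ≤ i then η x y else 0 :=
          Finset.sum_comm
  have key : qLow k (r : ℝ) η + cumF k (margB k η) i
      ≤ 1 + cumF k (margA k η) (i + r - 1) := by
    rw [hA, hB, ← hsum]
    unfold qLow
    rw [← Finset.sum_add_distrib, ← Finset.sum_add_distrib]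
    apply Finset.sum_le_sum
    intro x _
    rw [← Finset.sum_add_distrib, ← Finset.sum_add_distrib]
    apply Finset.sum_le_sum
    intro y _
    have h0 := hpos x y
    split_ifs <;> try linarith
    all_goals
      exfalso
      rename_i ha1 ha2 ha3
      have h4 : ((x:ℕ):ℝ) - ((y:ℕ):ℝ) < (r:ℝ) := ha1
      have h5 : (x:ℤ) - (y:ℤ) < r := by exact_mod_cast h4
      omega
  linarith

lemma chainF (c : ℝ) (F : ℤ → ℝ) (hF : ∀ j, F j < F (j - 1) + 2 * c) :
    ∀ n : ℕ, ∀ j : ℤ, F j ≤ F (j - n) + 2 * n * c := by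
  intro n
  induction n with
  | zero => intro j; simp
  | succ m ih =>
    intro j
    have h1 := hF j
    have h2 := ih (j - 1)
    have h3 : j - 1 - (m : ℤ) = j - ((m : ℕ) + 1 : ℕ) := by push_cast; ring
    rw [h3] at h2
    have h4 : ((m + 1 : ℕ) : ℝ) = (m : ℝ) + 1 := by push_cast; ring
    rw [h4]
    linarith

lemma combo (k : ℕ) (hk : 2 ≤ k) (A B : ℤ → ℝ)
    (hA0 : ∀ j : ℤ, j < 0 → A j = 0) (hA1 : ∀ j : ℤ, (k:ℤ) - 1 ≤ j → A j = 1)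
    (hB0 : ∀ j : ℤ, j < 0 → B j = 0) (hB1 : ∀ j : ℤ, (k:ℤ) - 1 ≤ j → B j = 1) :
    ∃ r : ℤ, -((k:ℤ) - 1) ≤ r ∧ r ≤ (k:ℤ) - 1 ∧
      (∃ j : ℤ, 1/(2*(k:ℝ)-1) ≤ A j - B (j - r - 1)) ∧
      (∃ i : ℤ, 1/(2*(k:ℝ)-1) ≤ B i - A (i + r - 1)) := by
  classical
  set c : ℝ := 1/(2*(k:ℝ)-1) with hc
  have hk1 : (2:ℝ) ≤ (k:ℝ) := by exact_mod_cast hk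
  have hden : (0:ℝ) < 2*(k:ℝ)-1 := by linarith
  have hcpos : 0 < c := by rw [hc]; positivity
  have hcmul : (2*(k:ℝ)-1) * c = 1 := by rw [hc]; field_simp
  have hc1 : c ≤ 1 := by rw [hc, div_le_one hden]; linarith
  set P : ℤ → Prop := fun z => -((k:ℤ) - 1) ≤ z ∧ ∃ j : ℤ, c ≤ A j - B (j - z - 1) with hP
  have hPk : P ((k:ℤ) - 1) := by
    refine ⟨by omega, ⟨(k:ℤ) - 1, ?_⟩⟩
    rw [hA1 _ le_rfl, hB0 _ (by omega)]
    linarith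
  obtain ⟨r, hPr, hmin⟩ := Int.exists_least_of_bdd
    (P := P) ⟨-((k:ℤ) - 1), fun z hz => hz.1⟩ ⟨_, hPk⟩
  obtain ⟨hr1, j0, hj0⟩ := hPr
  have hr2 : r ≤ (k:ℤ) - 1 := hmin _ hPk
  refine ⟨r, hr1, hr2, ⟨j0, hj0⟩, ?_⟩
  by_cases hre : r = -((k:ℤ) - 1)
  · refine ⟨(k:ℤ) - 1, ?_⟩
    rw [hB1 _ le_rfl, hA0 _ (by omega)]
    linarith
  · by_contra hQ
    push_neg at hQ
    have hP' : ¬ P (r - 1) := fun h => by have := hmin _ h; omega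
    have h1 : ∀ j : ℤ, A j - B (j - r) < c := by
      intro j
      by_contra h
      push_neg at h
      refine hP' ⟨by omega, ⟨j, ?_⟩⟩
      have e : j - (r - 1) - 1 = j - r := by ring
      rw [e]; exact h
    have h2 : ∀ i : ℤ, B i - A (i + r - 1) < c := hQ
    have hA2 : ∀ j : ℤ, A j < A (j - 1) + 2 * c := by
      intro j
      have t1 := h1 j
      have t2 := h2 (j - r)
      have e : j - r + r - 1 = j - 1 := by ring
      rw [e] at t2
      linarith
    have hB2 : ∀ i : ℤ, B i < B (i - 1) + 2 * c := by
      intro i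
      have t1 := h2 i
      have t2 := h1 (i + r - 1)
      have e : i + r - 1 - r = i - 1 := by ring
      rw [e] at t2
      linarith
    rcases le_or_gt 1 r with hr | hr
    · -- r ≥ 1 : chain on A
      set n : ℕ := ((k:ℤ) - r).toNat with hn
      have hnz : (n : ℤ) = (k:ℤ) - r := Int.toNat_of_nonneg (by omega)
      have hchain := chainF c A hA2 n ((k:ℤ) - 1)
      have e1 : (k:ℤ) - 1 - (n : ℤ) = r - 1 := by omega
      rw [e1] at hchain
      have hlast : A (r - 1) < c := by
        have := h1 (r - 1)
        rw [hB0 _ (by omega)] at this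
        linarith
      have hA1' : A ((k:ℤ) - 1) = 1 := hA1 _ le_rfl
      have hnr : (n : ℝ) = (k:ℝ) - (r:ℝ) := by exact_mod_cast congrArg (Int.cast : ℤ → ℝ) hnz
      have hrr : (1:ℝ) ≤ (r:ℝ) := by exact_mod_cast hr
      have hprod : 0 ≤ (2*(r:ℝ) - 2) * c := mul_nonneg (by linarith) hcpos.le
      rw [hA1', hnr] at hchain
      nlinarith [hchain, hlast, hprod, hcmul]
    · -- r ≤ 0 : chain on B
      set n : ℕ := ((k:ℤ) - 1 + r).toNat with hn
      have hnz : (n : ℤ) = (k:ℤ) - 1 + r := Int.toNat_of_nonneg (by omega)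
      have hchain := chainF c B hB2 n ((k:ℤ) - 1)
      have e1 : (k:ℤ) - 1 - (n : ℤ) = -r := by omega
      rw [e1] at hchain
      have hlast : B (-r) < c := by
        have := h2 (-r)
        rw [hA0 _ (by omega)] at this
        linarith
      have hB1' : B ((k:ℤ) - 1) = 1 := hB1 _ le_rfl
      have hnr : (n : ℝ) = (k:ℝ) - 1 + (r:ℝ) := by exact_mod_cast congrArg (Int.cast : ℤ → ℝ) hnz
      have hrz : r ≤ 0 := by omega
      have hrr : (r:ℝ) ≤ 0 := by exact_mod_cast hrz
      have hprod : 0 ≤ (-2*(r:ℝ)) * c := mul_nonneg (by linarith) hcpos.le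
      rw [hB1', hnr] at hchain
      nlinarith [hchain, hlast, hprod, hcmul]

theorem stmt4 (k : ℕ) (hk : 2 ≤ k) (ηa ηb : Fin k → ℝ) (ha : IsDist k ηa) (hb : IsDist k ηb) :
    ∃ r : ℤ, -((k : ℤ) - 1) ≤ r ∧ r ≤ (k : ℤ) - 1 ∧
      ∀ η, IsJoint k η → margA k η = ηa → margB k η = ηb →
        qLow k (r : ℝ) η ≤ 1/2 + (1/2) * (2*(k:ℝ)-3)/(2*(k:ℝ)-1) ∧
        1/2 - (1/2) * (2*(k:ℝ)-3)/(2*(k:ℝ)-1) ≤ qUp k (r : ℝ) η := by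
  have hk1 : (2:ℝ) ≤ (k:ℝ) := by exact_mod_cast hk
  have hden : (2*(k:ℝ)-1) ≠ 0 := by intro h; linarith
  obtain ⟨r, hr1, hr2, ⟨j, hj⟩, ⟨i, hi⟩⟩ := combo k hk (cumF k ηa) (cumF k ηb)
    (fun j hj => cumF_neg k ηa j hj) (fun j hj => cumF_one k ηa j hj ha.2)
    (fun j hj => cumF_neg k ηb j hj) (fun j hj => cumF_one k ηb j hj hb.2)
  refine ⟨r, hr1, hr2, ?_⟩
  intro η hη hma hmb
  have hup := frechet_up k r j η hη.1
  have hlo := frechet_low k r i η hη.1 hη.2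
  rw [hma, hmb] at hup hlo
  have e1 : 1/(2*(k:ℝ)-1) = 1/2 - (1/2) * (2*(k:ℝ)-3)/(2*(k:ℝ)-1) := by
    field_simp
    ring
  constructor
  · have e2 : 1 - 1/(2*(k:ℝ)-1) = 1/2 + (1/2) * (2*(k:ℝ)-3)/(2*(k:ℝ)-1) := by
      field_simp
      ring
    linarith
  · linarith
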